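/- Let d > 0 be a real number, T ∈ (0, ∞], and let v, n : [0,T) × ℝ → ℝ be such that n has continuous partial derivatives ∂_t n and ∂_x n, v is continuous with continuous ∂_x v, and the transport equation ∂_t n + d·v·∂_x n + 2d·(∂_x v)·n = 0 holds at every point. Let q : [0,T) × ℝ → ℝ satisfy q(0,x) = x, ∂_t q(t,x) = d·v(t, q(t,x)), and suppose ∂_x q exists and satisfies ∂_t(∂_x q)(t,x) = d·(∂_x v)(t, q(t,x))·∂_x q(t,x). Then for all (t,x) ∈ [0,T) × ℝ: n(t, q(t,x))·(∂_x q(t,x))² = n(0,x). -/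

import Mathlib

open scoped ENNReal
open Set Filter Topology


/-- Chain rule along a curve for a function with pointwise partial derivatives whose
`x`-partial is continuous on `S ×ˢ univ`. -/
lemma chain_aux (S : Set ℝ) (f : ℝ → ℝ → ℝ) (c : ℝ → ℝ) (c' : ℝ) (t : ℝ) (ht : t ∈ S)
    (hft : DifferentiableAt ℝ (fun s => f s (c t)) t)
    (hfx : ∀ s ∈ S, ∀ y : ℝ, DifferentiableAt ℝ (f s) y)
    (hfxc : ContinuousWithinAt (fun p : ℝ × ℝ => deriv (f p.1) p.2)
      (S ×ˢ (Set.univ : Set ℝ)) (t, c t))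
    (hc : HasDerivAt c c' t) :
    HasDerivWithinAt (fun s => f s (c s))
      (deriv (fun s => f s (c t)) t + deriv (f t) (c t) * c') S t := by
  have key : ∀ s ∈ S, ∃ ξ : ℝ, |ξ - c t| ≤ |c s - c t| ∧
      f s (c s) - f s (c t) = deriv (f s) ξ * (c s - c t) := by
    intro s hs
    rcases lt_trichotomy (c t) (c s) with h | h | h
    · obtain ⟨ξ, hξ, hder⟩ := exists_hasDerivAt_eq_slope (f s) (deriv (f s)) h
        (fun y _ => (hfx s hs y).continuousAt.continuousWithinAt)
        (fun y _ => (hfx s hs y).hasDerivAt)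
      refine ⟨ξ, ?_, ?_⟩
      · rw [abs_of_pos (by linarith [hξ.1]), abs_of_pos (by linarith)]
        linarith [hξ.2]
      · have := (eq_div_iff (sub_ne_zero.mpr h.ne')).mp hder
        linarith [this]
    · exact ⟨c t, by simp, by rw [← h, sub_self, sub_self, mul_zero]⟩
    · obtain ⟨ξ, hξ, hder⟩ := exists_hasDerivAt_eq_slope (f s) (deriv (f s)) h
        (fun y _ => (hfx s hs y).continuousAt.continuousWithinAt)
        (fun y _ => (hfx s hs y).hasDerivAt)
      refine ⟨ξ, ?_, ?_⟩
      · rw [abs_of_neg (by linarith [hξ.2]), abs_of_neg (by linarith)]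
        linarith [hξ.1]
      · have := (eq_div_iff (sub_ne_zero.mpr h.ne')).mp hder
        linear_combination this
  classical
  set ξf : ℝ → ℝ := fun s => if hs : s ∈ S then (key s hs).choose else c t with hξf
  have hξ1 : ∀ s ∈ S, |ξf s - c t| ≤ |c s - c t| := by
    intro s hs; simp only [hξf, dif_pos hs]; exact (key s hs).choose_spec.1
  have hξ2 : ∀ s ∈ S, f s (c s) - f s (c t) = deriv (f s) (ξf s) * (c s - c t) := by
    intro s hs; simp only [hξf, dif_pos hs]; exact (key s hs).choose_spec.2
  rw [hasDerivWithinAt_iff_tendsto_slope]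
  have hmem : ∀ᶠ s in 𝓝[S \ {t}] t, s ∈ S \ {t} := eventually_mem_nhdsWithin
  -- ξf tends to c t
  have hcabs : Tendsto (fun s => |c s - c t|) (𝓝[S \ {t}] t) (𝓝 0) := by
    have : Tendsto (fun s => |c s - c t|) (𝓝 t) (𝓝 |c t - c t|) :=
      ((hc.continuousAt.tendsto.sub tendsto_const_nhds).abs)
    simpa using this.mono_left nhdsWithin_le_nhds
  have hξtendsto : Tendsto ξf (𝓝[S \ {t}] t) (𝓝 (c t)) := by
    rw [tendsto_iff_norm_sub_tendsto_zero]
    refine tendsto_of_tendsto_of_tendsto_of_le_of_le' tendsto_const_nhds hcabs ?_ ?_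
    · exact Eventually.of_forall fun s => abs_nonneg _
    · exact hmem.mono fun s hs => hξ1 s hs.1
  -- deriv (f s) (ξf s) tends to deriv (f t) (c t)
  have hmap : Tendsto (fun s => ((s, ξf s) : ℝ × ℝ)) (𝓝[S \ {t}] t)
      (𝓝[S ×ˢ (Set.univ : Set ℝ)] (t, c t)) := by
    rw [tendsto_nhdsWithin_iff]
    constructor
    · exact (tendsto_id.mono_left nhdsWithin_le_nhds).prodMk_nhds hξtendsto
    · exact hmem.mono fun s hs => ⟨hs.1, mem_univ _⟩
  have hderivtendsto : Tendsto (fun s => deriv (f s) (ξf s)) (𝓝[S \ {t}] t)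
      (𝓝 (deriv (f t) (c t))) := Filter.Tendsto.comp hfxc hmap
  -- slope of c
  have hslopec : Tendsto (slope c t) (𝓝[S \ {t}] t) (𝓝 c') := by
    have := hc.hasDerivWithinAt (s := S)
    rwa [hasDerivWithinAt_iff_tendsto_slope] at this
  -- slope of s ↦ f s (c t)
  have hslopet : Tendsto (slope (fun u => f u (c t)) t) (𝓝[S \ {t}] t)
      (𝓝 (deriv (fun s => f s (c t)) t)) := by
    have := hft.hasDerivAt
    rw [hasDerivAt_iff_tendsto_slope] at this
    exact this.mono_left (nhdsWithin_mono _ (by intro u hu; exact hu.2))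
  have hcomb : Tendsto (fun s => deriv (f s) (ξf s) * slope c t s
      + slope (fun u => f u (c t)) t s) (𝓝[S \ {t}] t)
      (𝓝 (deriv (f t) (c t) * c' + deriv (fun s => f s (c t)) t)) :=
    (hderivtendsto.mul hslopec).add hslopet
  rw [show deriv (fun s => f s (c t)) t + deriv (f t) (c t) * c'
      = deriv (f t) (c t) * c' + deriv (fun s => f s (c t)) t by ring]
  refine hcomb.congr' ?_
  filter_upwards [hmem] with s hs
  have h2 := hξ2 s hs.1
  have : f s (c s) - f t (c t) = deriv (f s) (ξf s) * (c s - c t)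
      + (f s (c t) - f t (c t)) := by linarith
  rw [slope_def_field, slope_def_field, slope_def_field, this]
  ring

/-- **Lagrangian conservation law (Lemma 2.1).** If `n` solves the transport equation
`∂ₜn + d v ∂ₓn + 2d (∂ₓv) n = 0` on `[0,T) × ℝ` and `q` is the flow of `d·v`, then
`n(t, q(t,x)) (∂ₓq(t,x))² = n(0,x)`.  Here `T ∈ (0,∞]` is encoded as `T : ℝ≥0∞` with
`0 < T`, and membership of a time `t` in `[0,T)` as `0 ≤ t ∧ ENNReal.ofReal t < T`. -/
theorem lagrangian_conservation (d : ℝ) (hd : 0 < d) (T : ℝ≥0∞) (hT : 0 < T)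
    (v n q : ℝ → ℝ → ℝ)
    -- `n` has partial derivatives ∂ₜn and ∂ₓn, continuous on `[0,T) × ℝ`
    (hnt : ∀ t x : ℝ, 0 ≤ t → ENNReal.ofReal t < T →
      DifferentiableAt ℝ (fun s => n s x) t)
    (hnx : ∀ t x : ℝ, 0 ≤ t → ENNReal.ofReal t < T → DifferentiableAt ℝ (n t) x)
    (hntc : ContinuousOn (fun p : ℝ × ℝ => deriv (fun s => n s p.2) p.1)
      {p : ℝ × ℝ | 0 ≤ p.1 ∧ ENNReal.ofReal p.1 < T})
    (hnxc : ContinuousOn (fun p : ℝ × ℝ => deriv (n p.1) p.2)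
      {p : ℝ × ℝ | 0 ≤ p.1 ∧ ENNReal.ofReal p.1 < T})
    -- `v` is continuous with continuous ∂ₓv
    (hvc : ContinuousOn (fun p : ℝ × ℝ => v p.1 p.2)
      {p : ℝ × ℝ | 0 ≤ p.1 ∧ ENNReal.ofReal p.1 < T})
    (hvx : ∀ t x : ℝ, 0 ≤ t → ENNReal.ofReal t < T → DifferentiableAt ℝ (v t) x)
    (hvxc : ContinuousOn (fun p : ℝ × ℝ => deriv (v p.1) p.2)
      {p : ℝ × ℝ | 0 ≤ p.1 ∧ ENNReal.ofReal p.1 < T})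
    -- the transport equation holds at every point of `[0,T) × ℝ`
    (heq : ∀ t x : ℝ, 0 ≤ t → ENNReal.ofReal t < T →
      deriv (fun s => n s x) t + d * v t x * deriv (n t) x
        + 2 * d * deriv (v t) x * n t x = 0)
    -- the Lagrangian flow
    (hq0 : ∀ x : ℝ, q 0 x = x)
    (hqt : ∀ t x : ℝ, 0 ≤ t → ENNReal.ofReal t < T →
      HasDerivAt (fun s => q s x) (d * v t (q t x)) t)
    -- ∂ₓq exists and satisfies ∂ₜ(∂ₓq) = d (∂ₓv)(t, q) ∂ₓq
    (hqx : ∀ t x : ℝ, 0 ≤ t → ENNReal.ofReal t < T → DifferentiableAt ℝ (q t) x)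
    (hqxt : ∀ t x : ℝ, 0 ≤ t → ENNReal.ofReal t < T →
      HasDerivAt (fun s => deriv (q s) x)
        (d * deriv (v t) (q t x) * deriv (q t) x) t) :
    ∀ t x : ℝ, 0 ≤ t → ENNReal.ofReal t < T →
      n t (q t x) * (deriv (q t) x) ^ 2 = n 0 x := by
  intro t₀ x ht₀0 ht₀T
  set S : Set ℝ := {s : ℝ | 0 ≤ s ∧ ENNReal.ofReal s < T} with hS
  have hIccS : Icc (0 : ℝ) t₀ ⊆ S := fun s hs =>
    ⟨hs.1, lt_of_le_of_lt (ENNReal.ofReal_le_ofReal hs.2) ht₀T⟩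
  have hset : (S ×ˢ (Set.univ : Set ℝ)) =
      {p : ℝ × ℝ | 0 ≤ p.1 ∧ ENNReal.ofReal p.1 < T} := by
    ext p; simp [hS, Set.mem_prod, and_assoc]
  set g : ℝ → ℝ := fun s => n s (q s x) * (deriv (q s) x) ^ 2 with hg
  have hgS : ∀ s ∈ S, HasDerivWithinAt g 0 S s := by
    intro s hs
    have hm : HasDerivWithinAt (fun u => n u (q u x))
        (deriv (fun u => n u (q s x)) s + deriv (n s) (q s x) * (d * v s (q s x))) S s := by
      refine chain_aux S n (fun u => q u x) (d * v s (q s x)) s hs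
        (hnt s (q s x) hs.1 hs.2) (fun u hu y => hnx u y hu.1 hu.2) ?_
        (hqt s x hs.1 hs.2)
      have := hnxc (s, q s x) ⟨hs.1, hs.2⟩
      rwa [← hset] at this
    have hw : HasDerivWithinAt (fun u => deriv (q u) x)
        (d * deriv (v s) (q s x) * deriv (q s) x) S s :=
      (hqxt s x hs.1 hs.2).hasDerivWithinAt
    have hmul := hm.mul (hw.pow 2)
    have heqs := heq s (q s x) hs.1 hs.2
    refine (hmul : HasDerivWithinAt g _ S s).congr_deriv ?_
    push_cast
    simp only [Pi.pow_apply]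
    linear_combination (deriv (q s) x ^ 2) * heqs
  have hgc : ContinuousOn g (Icc 0 t₀) := fun s hs =>
    ((hgS s (hIccS hs)).continuousWithinAt).mono hIccS
  have hright : ∀ s ∈ Ico (0 : ℝ) t₀, HasDerivWithinAt g 0 (Ici s) s := by
    intro s hs
    have hsS : s ∈ S := hIccS ⟨hs.1, hs.2.le⟩
    have hb : ∃ b, s < b ∧ Ico s b ⊆ S := by
      rcases eq_or_ne T ⊤ with hTtop | hTtop
      · exact ⟨s + 1, by linarith, fun u hu => ⟨le_trans hs.1 hu.1, by simp [hTtop]⟩⟩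
      · refine ⟨T.toReal, (ENNReal.ofReal_lt_iff_lt_toReal hsS.1 hTtop).mp hsS.2,
          fun u hu => ⟨le_trans hs.1 hu.1,
            (ENNReal.ofReal_lt_iff_lt_toReal (le_trans hs.1 hu.1) hTtop).mpr hu.2⟩⟩
    obtain ⟨b, hsb, hbS⟩ := hb
    exact (hgS s hsS).mono_of_mem_nhdsWithin
      (mem_of_superset (Ico_mem_nhdsGE hsb) hbS)
  have hconst := constant_of_has_deriv_right_zero hgc hright t₀ ⟨ht₀0, le_refl t₀⟩
  have hq0id : q 0 = fun y => y := funext hq0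
  have hderiv0 : deriv (q 0) x = 1 := by rw [hq0id]; simp
  calc n t₀ (q t₀ x) * (deriv (q t₀) x) ^ 2 = g t₀ := rfl
    _ = g 0 := hconst
    _ = n 0 x := by simp [hg, hq0 x, hderiv0]
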